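/- Let σ_k be defined by σ_1 = 1 and σ_k = (1/(k(k-1))) Σ_{ν=1}^{k-1} σ_ν σ_{k-ν} [(1+α)ν - αk] ν for k ≥ 2, where 0 < α < 1. Then σ_k > 0 for all k ≥ 1. -/

import Mathlib

theorem stmt_13 (α : ℝ) (hα : 0 < α) (hα1 : α < 1) (σ : ℕ → ℝ)
    (hσ1 : σ 1 = 1)
    (hσ : ∀ k : ℕ, 2 ≤ k → σ k = (1 / ((k : ℝ) * ((k : ℝ) - 1))) *
      ∑ ν ∈ Finset.Ico 1 k, σ ν * σ (k - ν) * ((1 + α) * ν - α * k) * ν) :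
    ∀ k : ℕ, 1 ≤ k → 0 < σ k := by
  intro k
  induction k using Nat.strong_induction_on with
  | _ k ih =>
    intro hk
    rcases eq_or_lt_of_le hk with h1 | h2
    · rw [← h1, hσ1]; norm_num
    · have hk2 : 2 ≤ k := h2
      rw [hσ k hk2]
      have hkR : (2:ℝ) ≤ (k:ℝ) := by exact_mod_cast hk2
      have hc : 0 < 1 / ((k:ℝ) * ((k:ℝ) - 1)) := by
        apply div_pos one_pos
        nlinarith
      refine mul_pos hc ?_
      set g : ℕ → ℝ := fun ν => σ ν * σ (k - ν) * ((1 + α) * ν - α * k) * ν with hg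
      have hmap : ∀ ν ∈ Finset.Ico 1 k, k - ν ∈ Finset.Ico 1 k := by
        intro ν hν
        rw [Finset.mem_Ico] at *
        omega
      have hrefl : ∑ ν ∈ Finset.Ico 1 k, g ν = ∑ ν ∈ Finset.Ico 1 k, g (k - ν) := by
        refine Finset.sum_nbij' (fun ν => k - ν) (fun ν => k - ν) hmap hmap ?_ ?_ ?_
        · intro ν hν; rw [Finset.mem_Ico] at hν; show k - (k - ν) = ν; omega
        · intro ν hν; rw [Finset.mem_Ico] at hν; show k - (k - ν) = ν; omega
        · intro ν hν; rw [Finset.mem_Ico] at hν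
          have hs : k - (k - ν) = ν := by omega
          show g ν = g (k - (k - ν)); rw [hs]
      have h2S : (∑ ν ∈ Finset.Ico 1 k, g ν) * 2
          = ∑ ν ∈ Finset.Ico 1 k, (g ν + g (k - ν)) := by
        rw [Finset.sum_add_distrib, ← hrefl]; ring
      have hpos : 0 < ∑ ν ∈ Finset.Ico 1 k, (g ν + g (k - ν)) := by
        apply Finset.sum_pos
        · intro ν hν
          rw [Finset.mem_Ico] at hν
          have hν1 : 1 ≤ ν := hν.1
          have hνk : ν < k := hν.2
          have hσν : 0 < σ ν := ih ν hνk hν1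
          have hσkν : 0 < σ (k - ν) := ih (k - ν) (by omega) (by omega)
          have hcast : ((k - ν : ℕ) : ℝ) = (k:ℝ) - (ν:ℝ) := by
            rw [Nat.cast_sub (le_of_lt hνk)]
          have hsub : k - (k - ν) = ν := by omega
          simp only [hg, hsub, hcast]
          have hx : (1:ℝ) ≤ (ν:ℝ) := by exact_mod_cast hν1
          have hy : (1:ℝ) ≤ (k:ℝ) - (ν:ℝ) := by
            have : (ν:ℝ) + 1 ≤ (k:ℝ) := by exact_mod_cast hνk
            linarith
          set x := (ν:ℝ)
          set y := (k:ℝ) - (ν:ℝ)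
          have hk' : (k:ℝ) = x + y := by ring
          rw [hk']
          have key : σ ν * σ (k - ν) * ((1 + α) * x - α * (x + y)) * x
              + σ (k - ν) * σ ν * ((1 + α) * y - α * (x + y)) * y
              = σ ν * σ (k - ν) * ((x - y)^2 + 2 * x * y * (1 - α)) := by ring
          rw [key]
          apply mul_pos (mul_pos hσν hσkν)
          have hxy : 1 ≤ x * y := by nlinarith
          nlinarith [sq_nonneg (x - y)]
        · exact ⟨1, by rw [Finset.mem_Ico]; omega⟩
      linarith
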